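/- arXiv:1706.07775 — 17 statements merged into one kernel-verified Lean document; each statement's English description precedes it below -/
import Mathlib

section
/- Let R be a unital ring and a, b, c ∈ R. If y is a (b,c)-inverse of a (i.e., y ∈ bRy ∩ yRc, yab = b, and cay = c), then y is unique. -/
/-- `y` is a `(b,c)`-inverse of `a`: `y ∈ bRy ∩ yRc`, `yab = b`, `cay = c`. -/
def IsBCInverse {R : Type*} [Ring R] (a b c y : R) : Prop :=
  (∃ r : R, y = b * r * y) ∧ (∃ s : R, y = y * s * c) ∧ y * a * b = b ∧ c * a * y = c

theorem bc_inverse_unique {R : Type*} [Ring R] (a b c y₁ y₂ : R)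
    (h₁ : IsBCInverse a b c y₁) (h₂ : IsBCInverse a b c y₂) : y₁ = y₂ := by
  obtain ⟨⟨r₁, hr₁⟩, ⟨s₁, hs₁⟩, hb₁, hc₁⟩ := h₁
  obtain ⟨⟨r₂, hr₂⟩, ⟨s₂, hs₂⟩, hb₂, hc₂⟩ := h₂
  calc y₁ = y₁ * s₁ * c := hs₁
    _ = y₁ * s₁ * (c * a * y₂) := by rw [hc₂]
    _ = (y₁ * s₁ * c) * a * y₂ := by noncomm_ring
    _ = y₁ * a * y₂ := by rw [← hs₁]
    _ = y₁ * a * (b * r₂ * y₂) := by rw [← hr₂]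
    _ = (y₁ * a * b) * (r₂ * y₂) := by noncomm_ring
    _ = b * (r₂ * y₂) := by rw [hb₁]
    _ = y₂ := by rw [← mul_assoc, ← hr₂]
end

section
/- Let R be a unital ring and a, b, c, y ∈ R. Then y is the (b,c)-inverse of a if and only if yay = y, yR = bR, and Ry = Rc. -/
theorem bc_inverse_iff {R : Type*} [Ring R] (a b c y : R) :
    IsBCInverse a b c y ↔
      y * a * y = y ∧
      {z : R | ∃ r : R, z = y * r} = {z : R | ∃ r : R, z = b * r} ∧
      {z : R | ∃ r : R, z = r * y} = {z : R | ∃ r : R, z = r * c} := by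
  constructor
  · rintro ⟨⟨r, hr⟩, ⟨s, hs⟩, hb, hc⟩
    refine ⟨?_, ?_, ?_⟩
    · calc y * a * y = y * a * (b * r * y) := by rw [← hr]
        _ = (y * a * b) * r * y := by noncomm_ring
        _ = b * r * y := by rw [hb]
        _ = y := hr.symm
    · ext z
      constructor
      · rintro ⟨t, rfl⟩
        exact ⟨r * y * t, by (conv_lhs => rw [hr]); noncomm_ring⟩
      · rintro ⟨t, rfl⟩
        exact ⟨a * b * t, by (conv_lhs => rw [← hb]); noncomm_ring⟩
    · ext z
      constructor
      · rintro ⟨t, rfl⟩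
        exact ⟨t * y * s, by (conv_lhs => rw [hs]); noncomm_ring⟩
      · rintro ⟨t, rfl⟩
        exact ⟨t * c * a, by (conv_lhs => rw [← hc]); noncomm_ring⟩
  · rintro ⟨hyay, h1, h2⟩
    obtain ⟨r, hr⟩ : ∃ r : R, y = b * r := (Set.ext_iff.mp h1 y).mp ⟨1, (mul_one y).symm⟩
    obtain ⟨s, hs⟩ : ∃ s : R, y = s * c := (Set.ext_iff.mp h2 y).mp ⟨1, (one_mul y).symm⟩
    obtain ⟨t, ht⟩ : ∃ t : R, b = y * t := (Set.ext_iff.mp h1 b).mpr ⟨1, (mul_one b).symm⟩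
    obtain ⟨u, hu⟩ : ∃ u : R, c = u * y := (Set.ext_iff.mp h2 c).mpr ⟨1, (one_mul c).symm⟩
    refine ⟨⟨r * a, ?_⟩, ⟨a * s, ?_⟩, ?_, ?_⟩
    · calc y = y * a * y := hyay.symm
        _ = b * r * a * y := by rw [← hr]
        _ = b * (r * a) * y := by noncomm_ring
    · calc y = y * a * y := hyay.symm
        _ = y * a * (s * c) := by rw [← hs]
        _ = y * (a * s) * c := by noncomm_ring
    · calc y * a * b = y * a * (y * t) := by rw [← ht]
        _ = (y * a * y) * t := by noncomm_ring
        _ = y * t := by rw [hyay]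
        _ = b := ht.symm
    · calc c * a * y = u * y * a * y := by rw [← hu]
        _ = u * (y * a * y) := by noncomm_ring
        _ = u * y := by rw [hyay]
        _ = c := hu.symm
end

section
/- Let R be a unital ring and a, b, c ∈ R. Then a has a (b,c)-inverse if and only if b ∈ Rcab and c ∈ cabR. -/
theorem bc_invertible_iff {R : Type*} [Ring R] (a b c : R) :
    (∃ y : R, IsBCInverse a b c y) ↔
      (∃ r : R, b = r * (c * a * b)) ∧ (∃ s : R, c = (c * a * b) * s) := by
  constructor
  · rintro ⟨y, ⟨r, hr⟩, ⟨s, hs⟩, hb, hc⟩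
    refine ⟨⟨y * s, ?_⟩, ⟨r * y, ?_⟩⟩
    · have : y * s * (c * a * b) = (y * s * c) * a * b := by noncomm_ring
      rw [this, ← hs, hb]
    · have : (c * a * b) * (r * y) = (c * a) * (b * r * y) := by noncomm_ring
      rw [this, ← hr]
      exact hc.symm
  · rintro ⟨⟨r, hr⟩, ⟨s, hs⟩⟩
    set t := c * a * b with ht
    refine ⟨r * t * s, ⟨s * a, ?_⟩, ⟨a * r, ?_⟩, ?_, ?_⟩
    · -- y = b * (s*a) * y : since b = r*t, y = r*t*s = b*s, and t*s*a*(r*t) = t ...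
      have h1 : r * t * s * a * (r * t * s) = r * (t * s * a * (r * t)) * s := by noncomm_ring
      have h2 : t * s * a * (r * t) = t := by
        rw [← hr, ← hs]
      have h3 : b * (s * a) * (r * t * s) = r * t * s * a * (r * t * s) := by
        rw [hr]; noncomm_ring
      rw [h3, h1, h2]
    · have h2 : t * s * a * (r * t) = t := by
        rw [← hr, ← hs]
      have h3 : r * t * s * (a * r) * c = r * (t * s * a * (r * t)) * s := by
        rw [hs]; noncomm_ring
      rw [h3, h2]
    · have : r * t * s * a * b = r * (t * s * a * b) := by noncomm_ring
      rw [this, ← hs, ← ht]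
      exact hr.symm
    · have : c * a * (r * t * s) = (c * a * (r * t)) * s := by noncomm_ring
      rw [this, ← hr, ← ht]
      exact hs.symm
end

section
/- Let R be a unital ring and a, b, c ∈ R. If a has a (b,c)-inverse, then cab, b, and c are all regular (i.e., each has an inner inverse). -/
def RingRegular {R : Type*} [Ring R] (x : R) : Prop := ∃ z : R, x * z * x = x

theorem bc_invertible_regular {R : Type*} [Ring R] (a b c : R)
    (h : ∃ y : R, IsBCInverse a b c y) :
    RingRegular (c * a * b) ∧ RingRegular b ∧ RingRegular c := by
  obtain ⟨y, ⟨r, hr⟩, ⟨s, hs⟩, hb, hc⟩ := h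
  refine ⟨⟨r * y * s, ?_⟩, ⟨r * y * a, ?_⟩, ⟨a * y * s, ?_⟩⟩
  · have : c * a * b * (r * y * s) * (c * a * b)
        = c * a * (b * r * y) * s * c * a * b := by noncomm_ring
    rw [this, ← hr]
    have : c * a * y * s * c * a * b = c * a * (y * s * c) * a * b := by noncomm_ring
    rw [this, ← hs]
    have : c * a * y * a * b = (c * a * y) * a * b := by noncomm_ring
    rw [this, hc]
  · have : b * (r * y * a) * b = (b * r * y) * a * b := by noncomm_ring
    rw [this, ← hr, hb]
  · have : c * (a * y * s) * c = c * a * (y * s * c) := by noncomm_ring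
    rw [this, ← hs, hc]
end

section
/- Let R be a unital ring and a, b, c ∈ R. Then a is (b,c)-invertible if and only if c is regular, (ab)° = b°, and R = abR ⊕ c° (internal direct sum of right ideals/additive subgroups). -/
theorem bc_invertible_iff_right {R : Type*} [Ring R] (a b c : R) :
    (∃ y : R, IsBCInverse a b c y) ↔
      RingRegular c ∧
      {r : R | (a * b) * r = 0} = {r : R | b * r = 0} ∧
      (∀ x : R, ∃ r w : R, c * w = 0 ∧ x = a * b * r + w) ∧
      (∀ x : R, (∃ r : R, x = a * b * r) → c * x = 0 → x = 0) := by
  constructor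
  · rintro ⟨y, ⟨r, hr⟩, ⟨s, hs⟩, hyab, hcay⟩
    refine ⟨⟨s, ?_⟩, ?_, ?_, ?_⟩
    · calc c * s * c = c * a * y * s * c := by rw [hcay]
        _ = c * a * (y * s * c) := by noncomm_ring
        _ = c * a * y := by rw [← hs]
        _ = c := hcay
    · ext t
      simp only [Set.mem_setOf_eq]
      constructor
      · intro h
        calc b * t = y * a * b * t := by rw [hyab]
          _ = y * (a * b * t) := by noncomm_ring
          _ = 0 := by rw [h, mul_zero]
      · intro h
        calc a * b * t = a * (b * t) := by noncomm_ring
          _ = 0 := by rw [h, mul_zero]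
    · intro x
      refine ⟨r * y * x, x - a * y * x, ?_, ?_⟩
      · calc c * (x - a * y * x) = c * x - c * a * y * x := by noncomm_ring
          _ = 0 := by rw [hcay]; exact sub_self _
      · calc x = a * (b * r * y) * x + (x - a * y * x) := by rw [← hr]; noncomm_ring
          _ = a * b * (r * y * x) + (x - a * y * x) := by noncomm_ring
    · rintro x ⟨t, ht⟩ hcx
      have hyx : y * x = 0 := by
        calc y * x = y * s * c * x := by rw [← hs]
          _ = y * s * (c * x) := by noncomm_ring
          _ = 0 := by rw [hcx, mul_zero]
      calc x = a * (y * a * b) * t := by rw [hyab, ht]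
        _ = a * (y * (a * b * t)) := by noncomm_ring
        _ = a * (y * x) := by rw [← ht]
        _ = 0 := by rw [hyx, mul_zero]
  · rintro ⟨⟨z, hz⟩, hann, hdec, huniq⟩
    obtain ⟨p, w, hcw, h1⟩ := hdec 1
    have hc : c * (a * b * p) = c := by
      calc c * (a * b * p) = c * (a * b * p + w) - c * w := by noncomm_ring
        _ = c := by rw [← h1, hcw]; noncomm_ring
    have key : ∀ u : R, c * (a * b * (p * u)) = c * u := by
      intro u
      calc c * (a * b * (p * u)) = c * (a * b * p) * u := by noncomm_ring
        _ = c * u := by rw [hc]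
    have h2 : a * b * (p * (z * (c * (a * b)))) = a * b := by
      have h0 : a * b * (p * (z * (c * (a * b)))) - a * b = 0 := by
        apply huniq
        · exact ⟨p * (z * (c * (a * b))) - 1, by noncomm_ring⟩
        · calc c * (a * b * (p * (z * (c * (a * b)))) - a * b)
              = c * (a * b * (p * (z * (c * (a * b))))) - c * (a * b) := by noncomm_ring
            _ = c * (z * (c * (a * b))) - c * (a * b) := by rw [key]
            _ = c * z * c * (a * b) - c * (a * b) := by noncomm_ring
            _ = 0 := by rw [hz]; exact sub_self _
      exact sub_eq_zero.mp h0
    have h3 : b * (p * (z * (c * (a * b)))) = b := by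
      have hmem : (p * (z * (c * (a * b))) - 1) ∈ {u : R | (a * b) * u = 0} := by
        show (a * b) * (p * (z * (c * (a * b))) - 1) = 0
        calc (a * b) * (p * (z * (c * (a * b))) - 1)
            = a * b * (p * (z * (c * (a * b)))) - a * b := by noncomm_ring
          _ = 0 := by rw [h2]; exact sub_self _
      rw [hann] at hmem
      have hb : b * (p * (z * (c * (a * b))) - 1) = 0 := hmem
      have := sub_eq_zero.mp (by calc b * (p * (z * (c * (a * b)))) - b
            = b * (p * (z * (c * (a * b))) - 1) := by noncomm_ring
          _ = 0 := hb)
      exact this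
    refine ⟨b * (p * (z * c)), ⟨p * (z * (c * a)), ?_⟩, ⟨z, ?_⟩, ?_, ?_⟩
    · calc b * (p * (z * c))
          = b * (p * (z * (c * (a * b)))) * (p * (z * c)) := by rw [h3]
        _ = b * (p * (z * (c * a))) * (b * (p * (z * c))) := by noncomm_ring
    · calc b * (p * (z * c)) = b * (p * (z * (c * z * c))) := by rw [hz]
        _ = b * (p * (z * c)) * z * c := by noncomm_ring
    · calc b * (p * (z * c)) * a * b = b * (p * (z * (c * (a * b)))) := by noncomm_ring
        _ = b := h3
    · calc c * a * (b * (p * (z * c))) = c * (a * b * (p * (z * c))) := by noncomm_ring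
        _ = c * (z * c) := key _
        _ = c * z * c := by noncomm_ring
        _ = c := hz
end

section
/- Let R be a unital ring and a, b, c ∈ R. Then a is (b,c)-invertible if and only if b is regular, °(ca) = °c, and R = Rca ⊕ °b. -/
theorem bc_invertible_iff_left {R : Type*} [Ring R] (a b c : R) :
    (∃ y : R, IsBCInverse a b c y) ↔
      RingRegular b ∧
      {r : R | r * (c * a) = 0} = {r : R | r * c = 0} ∧
      (∀ x : R, ∃ r w : R, w * b = 0 ∧ x = r * (c * a) + w) ∧
      (∀ x : R, (∃ r : R, x = r * (c * a)) → x * b = 0 → x = 0) := by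
  constructor
  · rintro ⟨y, ⟨r, hr⟩, ⟨s, hs⟩, h1, h2⟩
    refine ⟨⟨r * y * a, ?_⟩, ?_, ?_, ?_⟩
    · calc b * (r * y * a) * b = (b * r * y) * (a * b) := by simp only [mul_assoc]
        _ = y * (a * b) := by rw [← hr]
        _ = b := by rw [← mul_assoc]; exact h1
    · ext t
      simp only [Set.mem_setOf_eq]
      constructor
      · intro h
        calc t * c = t * (c * a * y) := by rw [h2]
          _ = t * (c * a) * y := by simp only [mul_assoc]
          _ = 0 := by rw [h, zero_mul]
      · intro h
        calc t * (c * a) = t * c * a := by rw [mul_assoc]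
          _ = 0 := by rw [h, zero_mul]
    · intro x
      refine ⟨x * y * s, x - x * y * a, ?_, ?_⟩
      · calc (x - x * y * a) * b = x * b - x * (y * a * b) := by noncomm_ring
          _ = x * b - x * b := by rw [h1]
          _ = 0 := sub_self _
      · have key : x * y * s * (c * a) = x * y * a := by
          calc x * y * s * (c * a) = x * ((y * s * c) * a) := by simp only [mul_assoc]
            _ = x * (y * a) := by rw [← hs]
            _ = x * y * a := by rw [mul_assoc]
        rw [key]
        abel
    · intro x hx hxb
      obtain ⟨t, ht⟩ := hx
      have hxya : x = x * y * a := by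
        calc x = t * (c * a) := ht
          _ = t * (c * a * y * a) := by rw [h2]
          _ = t * (c * a) * (y * a) := by simp only [mul_assoc]
          _ = x * y * a := by rw [← ht, ← mul_assoc]
      have hxy : x * y = 0 := by
        calc x * y = x * (b * r * y) := by rw [← hr]
          _ = (x * b) * (r * y) := by simp only [mul_assoc]
          _ = 0 := by rw [hxb, zero_mul]
      rw [hxya, hxy, zero_mul]
  · rintro ⟨⟨z, hz⟩, hset, hdec, huniq⟩
    obtain ⟨r, w, hwb, h1⟩ := hdec 1
    have hb : r * (c * a) * b = b := by
      have h2 := congrArg (· * b) h1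
      simp only [one_mul, add_mul, hwb, add_zero] at h2
      exact h2.symm
    set y := b * z * (r * c) with hy
    have hyab : y * a * b = b := by
      calc y * a * b = b * z * (r * (c * a) * b) := by rw [hy]; simp only [mul_assoc]
        _ = b * z * b := by rw [hb]
        _ = b := hz
    have key : (c * a * (b * z) * r - 1) * (c * a) = 0 := by
      apply huniq
      · exact ⟨c * a * (b * z) * r - 1, rfl⟩
      · have e1 : (c * a * (b * z) * r - 1) * (c * a) * b
            = c * a * (b * z) * (r * (c * a) * b) - c * a * b := by noncomm_ring
        rw [e1, hb]
        have e2 : c * a * (b * z) * b = c * a * b := by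
          calc c * a * (b * z) * b = c * a * (b * z * b) := by simp only [mul_assoc]
            _ = c * a * b := by rw [hz]
        rw [e2, sub_self]
    have hc : (c * a * (b * z) * r - 1) * c = 0 := (Set.ext_iff.mp hset _).mp key
    have hc' : c * a * (b * z) * r * c = c := by
      rw [sub_mul, one_mul] at hc
      exact sub_eq_zero.mp hc
    have hcay : c * a * y = c := by
      calc c * a * y = c * a * (b * z) * r * c := by rw [hy]; simp only [mul_assoc]
        _ = c := hc'
    refine ⟨y, ⟨z * r * (c * a), ?_⟩, ⟨a * (b * z) * r, ?_⟩, hyab, hcay⟩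
    · calc y = b * z * (r * c) := hy
        _ = b * z * (r * (c * a * y)) := by rw [hcay]
        _ = b * (z * r * (c * a)) * y := by simp only [mul_assoc]
    · calc y = b * z * (r * c) := hy
        _ = (y * a * b) * z * (r * c) := by rw [hyab]
        _ = y * (a * (b * z) * r) * c := by simp only [mul_assoc]
end

section
/- Let R be a unital ring and a, b, c ∈ R such that cab is regular with inner inverse t (i.e., cab·t·cab = cab). Let x = b t c. Then the following are equivalent: (1) xax = x and bR = xR; (2) xax = x and bR ⊆ xR; (3) Rb = Rcab. -/
theorem inner_inverse_tfae_b {R : Type*} [Ring R] (a b c t : R)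
    (ht : c * a * b * t * (c * a * b) = c * a * b) (x : R) (hx : x = b * t * c) :
    List.TFAE
      [x * a * x = x ∧ {z : R | ∃ r : R, z = b * r} = {z : R | ∃ r : R, z = x * r},
       x * a * x = x ∧ {z : R | ∃ r : R, z = b * r} ⊆ {z : R | ∃ r : R, z = x * r},
       {z : R | ∃ r : R, z = r * b} = {z : R | ∃ r : R, z = r * (c * a * b)}] := by
  tfae_have 1 → 2 := fun ⟨h1, h2⟩ => ⟨h1, h2.le⟩
  tfae_have 2 → 3 := by
    rintro ⟨h1, h2⟩
    obtain ⟨r, hr⟩ : b ∈ {z : R | ∃ r : R, z = x * r} := h2 ⟨1, (mul_one b).symm⟩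
    have hb : b = b * t * (c * a * b) := by
      have : b = x * a * b := by
        calc b = x * r := hr
        _ = x * a * x * r := by rw [h1]
        _ = x * a * (x * r) := by rw [mul_assoc]
        _ = x * a * b := by rw [← hr]
      calc b = x * a * b := this
        _ = b * t * (c * a * b) := by rw [hx]; noncomm_ring
    ext z
    constructor
    · rintro ⟨r, rfl⟩
      exact ⟨r * (b * t), by rw [mul_assoc]; nth_rewrite 1 [hb]; noncomm_ring⟩
    · rintro ⟨r, rfl⟩
      exact ⟨r * (c * a), by noncomm_ring⟩
  tfae_have 3 → 1 := by
    intro h3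
    obtain ⟨s, hs⟩ : b ∈ {z : R | ∃ r : R, z = r * (c * a * b)} := h3 ▸ ⟨1, (one_mul b).symm⟩
    have hb : b * t * (c * a * b) = b := by
      nth_rewrite 1 [hs]
      rw [mul_assoc s, mul_assoc s, ht, ← hs]
    have hxab : x * (a * b) = b := by
      rw [hx]; rw [show b * t * c * (a * b) = b * t * (c * a * b) by noncomm_ring, hb]
    constructor
    · rw [hx, show b * t * c * a * (b * t * c) = b * t * (c * a * b) * t * c by noncomm_ring,
        hb]
    · ext z
      constructor
      · rintro ⟨r, rfl⟩
        exact ⟨a * b * r, by rw [← mul_assoc, hxab]⟩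
      · rintro ⟨r, rfl⟩
        exact ⟨t * c * r, by rw [hx]; noncomm_ring⟩
  tfae_finish
end

section
/- Let R be a unital ring and a, b, c ∈ R such that cab is regular with inner inverse t. Let x = b t c. Then x is the (b,c)-inverse of a if and only if b° = (cab)° and cR = cabR. -/
theorem bc_inverse_inner_expression {R : Type*} [Ring R] (a b c t : R)
    (ht : c * a * b * t * (c * a * b) = c * a * b) (x : R) (hx : x = b * t * c) :
    IsBCInverse a b c x ↔
      ({r : R | b * r = 0} = {r : R | c * a * b * r = 0} ∧
       {z : R | ∃ r : R, z = c * r} = {z : R | ∃ r : R, z = c * a * b * r}) := by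
  subst hx
  constructor
  · rintro ⟨-, -, hab, hca⟩
    constructor
    · ext r
      simp only [Set.mem_setOf_eq]
      constructor
      · intro h
        calc c * a * b * r = c * a * (b * r) := by noncomm_ring
          _ = 0 := by rw [h, mul_zero]
      · intro h
        calc b * r = (b * t * c * a * b) * r := by rw [hab]
          _ = b * t * (c * a * b * r) := by noncomm_ring
          _ = 0 := by rw [h, mul_zero]
    · ext z
      simp only [Set.mem_setOf_eq]
      constructor
      · rintro ⟨r, rfl⟩
        refine ⟨t * c * r, ?_⟩
        calc c * r = (c * a * (b * t * c)) * r := by rw [hca]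
          _ = c * a * b * (t * c * r) := by noncomm_ring
      · rintro ⟨r, rfl⟩
        exact ⟨a * b * r, by noncomm_ring⟩
  · rintro ⟨h1, h2⟩
    have hab : b * t * c * a * b = b := by
      have hz : c * a * b * (t * (c * a * b) - 1) = 0 := by
        rw [mul_sub, mul_one, ← mul_assoc, ht, sub_self]
      have hb : b * (t * (c * a * b) - 1) = 0 :=
        (Set.ext_iff.mp h1 (t * (c * a * b) - 1)).mpr hz
      rw [mul_sub, mul_one, sub_eq_zero] at hb
      calc b * t * c * a * b = b * (t * (c * a * b)) := by noncomm_ring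
        _ = b := hb
    have hca : c * a * (b * t * c) = c := by
      obtain ⟨s, hs⟩ := (Set.ext_iff.mp h2 c).mp ⟨1, (mul_one c).symm⟩
      calc c * a * (b * t * c) = c * a * b * t * c := by noncomm_ring
        _ = c * a * b * t * (c * a * b * s) := by rw [← hs]
        _ = (c * a * b * t * (c * a * b)) * s := by noncomm_ring
        _ = c * a * b * s := by rw [ht]
        _ = c := hs.symm
    refine ⟨⟨t * c * a, ?_⟩, ⟨a * b * t, ?_⟩, ?_, hca⟩
    · calc b * t * c = b * t * (c * a * (b * t * c)) := by rw [hca]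
        _ = b * (t * c * a) * (b * t * c) := by noncomm_ring
    · calc b * t * c = (b * t * c * a * b) * t * c := by rw [hab]
        _ = (b * t * c) * (a * b * t) * c := by noncomm_ring
    · exact hab
end

section
/- Let R be a unital ring and a, d ∈ R such that dad is regular with inner inverse t. Let x = d t d. Then x is the inverse of a along d if and only if d° = (dad)° and dR = dadR. -/
/-- `y` is the inverse of `a` along `d`. -/
def IsInverseAlong {R : Type*} [Ring R] (a d y : R) : Prop :=
  y * a * d = d ∧ d * a * y = d ∧
  {z : R | ∃ r : R, z = y * r} ⊆ {z : R | ∃ r : R, z = d * r} ∧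
  {z : R | ∃ r : R, z = r * y} ⊆ {z : R | ∃ r : R, z = r * d}

theorem inverse_along_inner_expression {R : Type*} [Ring R] (a d t : R)
    (ht : d * a * d * t * (d * a * d) = d * a * d) (x : R) (hx : x = d * t * d) :
    IsInverseAlong a d x ↔
      ({r : R | d * r = 0} = {r : R | d * a * d * r = 0} ∧
       {z : R | ∃ r : R, z = d * r} = {z : R | ∃ r : R, z = d * a * d * r}) := by
  subst hx
  constructor
  · rintro ⟨h1, h2, -, -⟩
    -- h1 : d*t*d*a*d = d,  h2 : d*a*(d*t*d) = d
    constructor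
    · ext r
      simp only [Set.mem_setOf_eq]
      constructor
      · intro h
        calc d * a * d * r = d * a * (d * r) := by simp [mul_assoc]
          _ = 0 := by rw [h, mul_zero]
      · intro h
        calc d * r = d * t * d * a * d * r := by rw [h1]
          _ = d * t * (d * a * d * r) := by simp [mul_assoc]
          _ = 0 := by rw [h, mul_zero]
    · ext z
      simp only [Set.mem_setOf_eq]
      constructor
      · rintro ⟨r, rfl⟩
        refine ⟨t * (d * r), ?_⟩
        calc d * r = d * a * (d * t * d) * r := by rw [h2]
          _ = d * a * d * (t * (d * r)) := by simp [mul_assoc]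
      · rintro ⟨r, rfl⟩
        exact ⟨a * d * r, by simp [mul_assoc]⟩
  · rintro ⟨hk, hr⟩
    obtain ⟨s, hs⟩ : (d : R) ∈ {z : R | ∃ r : R, z = d * a * d * r} := by
      rw [← hr]; exact ⟨1, by rw [mul_one]⟩
    have k : d * a * d * (t * (d * a * d) - 1) = 0 := by
      rw [mul_sub, mul_one, sub_eq_zero,
        show d * a * d * (t * (d * a * d)) = d * a * d * t * (d * a * d) by
          simp [mul_assoc], ht]
    have k2 : d * (t * (d * a * d) - 1) = 0 := by
      have : (t * (d * a * d) - 1) ∈ {r : R | d * r = 0} := by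
        rw [hk]; exact k
      exact this
    have e1 : d * t * d * a * d = d := by
      have := sub_eq_zero.mp (by rw [mul_sub, mul_one] at k2; exact k2)
      calc d * t * d * a * d = d * (t * (d * a * d)) := by simp [mul_assoc]
        _ = d := this
    have e2 : d * a * (d * t * d) = d := by
      calc d * a * (d * t * d)
          = d * a * (d * t * (d * a * d * s)) := by rw [← hs]
        _ = d * a * d * t * (d * a * d) * s := by simp [mul_assoc]
        _ = d * a * d * s := by rw [ht]
        _ = d := hs.symm
    refine ⟨e1, e2, ?_, ?_⟩
    · rintro z ⟨r, rfl⟩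
      exact ⟨t * d * r, by simp [mul_assoc]⟩
    · rintro z ⟨r, rfl⟩
      exact ⟨r * (d * t), by simp [mul_assoc]⟩
end

section
/- Let R be a unital ring and a, b, c ∈ R with cab regular with inner inverse t. If a has a left (b,c)-inverse, then for every v ∈ R, the element b t c + v(1 − cab·t)c is a left (b,c)-inverse of a. -/
def IsLeftBCInverse {R : Type*} [Ring R] (a b c x : R) : Prop :=
  {z : R | ∃ r : R, z = r * x} ⊆ {z : R | ∃ r : R, z = r * c} ∧ x * a * b = b

theorem left_bc_inverse_general_solution {R : Type*} [Ring R] (a b c t : R)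
    (ht : c * a * b * t * (c * a * b) = c * a * b)
    (h : ∃ x : R, IsLeftBCInverse a b c x) (v : R) :
    IsLeftBCInverse a b c (b * t * c + v * (1 - c * a * b * t) * c) := by
  obtain ⟨x, hsub, hx⟩ := h
  obtain ⟨r, hr⟩ : ∃ r : R, x = r * c := hsub ⟨1, (one_mul x).symm⟩
  have hb : b = r * (c * a * b) := by
    calc b = x * a * b := hx.symm
      _ = r * (c * a * b) := by rw [hr]; noncomm_ring
  have key : b * t * (c * a * b) = b := by
    calc b * t * (c * a * b) = r * (c * a * b * t * (c * a * b)) := by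
          nth_rewrite 1 [hb]; noncomm_ring
      _ = r * (c * a * b) := by rw [ht]
      _ = b := hb.symm
  constructor
  · rintro z ⟨s, rfl⟩
    exact ⟨s * (b * t + v * (1 - c * a * b * t)), by noncomm_ring⟩
  · have : (b * t * c + v * (1 - c * a * b * t) * c) * a * b
        = b * t * (c * a * b) + v * (c * a * b - c * a * b * t * (c * a * b)) := by
      noncomm_ring
    rw [this, ht, key, sub_self, mul_zero, add_zero]
end

section
/- Let R be a unital ring and a, b, c ∈ R. If a has both a left (b,c)-inverse and a right (b,c)-inverse, then both are unique and they coincide. -/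
def IsRightBCInverse {R : Type*} [Ring R] (a b c y : R) : Prop :=
  {z : R | ∃ r : R, z = y * r} ⊆ {z : R | ∃ r : R, z = b * r} ∧ c * a * y = c

theorem left_right_bc_inverse_unique {R : Type*} [Ring R] (a b c : R)
    (hl : ∃ x : R, IsLeftBCInverse a b c x) (hr : ∃ y : R, IsRightBCInverse a b c y) :
    ∀ x y : R, IsLeftBCInverse a b c x → IsRightBCInverse a b c y → x = y := by
  intro x y hx hy
  obtain ⟨r, hrx⟩ := hx.1 ⟨1, (one_mul x).symm⟩
  obtain ⟨s, hsy⟩ := hy.1 ⟨1, (mul_one y).symm⟩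
  have h1 : x = x * a * y := by
    calc x = r * c := hrx
    _ = r * (c * a * y) := by rw [hy.2]
    _ = (r * c) * a * y := by noncomm_ring
    _ = x * a * y := by rw [← hrx]
  have h2 : x * a * y = y := by
    calc x * a * y = x * a * (b * s) := by rw [← hsy]
    _ = (x * a * b) * s := by noncomm_ring
    _ = b * s := by rw [hx.2]
    _ = y := hsy.symm
  rw [h1, h2]
end

section
/- Let R be a unital ring and a, b, c, u, v ∈ R with bR = uR and Rc = Rv. Then a is (b,c)-invertible if and only if a is (u,v)-invertible, and in this case the (b,c)-inverse of a equals the (u,v)-inverse of a. -/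
lemma bc_transfer_aux {R : Type*} [Ring R] (a b c u v y : R)
    (hbu : {z : R | ∃ r : R, z = b * r} = {z : R | ∃ r : R, z = u * r})
    (hcv : {z : R | ∃ r : R, z = r * c} = {z : R | ∃ r : R, z = r * v})
    (h : IsBCInverse a b c y) : IsBCInverse a u v y := by
  obtain ⟨⟨r, hr⟩, ⟨s, hs⟩, hb, hc⟩ := h
  obtain ⟨p, hp⟩ : b ∈ {z : R | ∃ r : R, z = u * r} := hbu ▸ ⟨1, by simp⟩
  obtain ⟨q, hq⟩ : u ∈ {z : R | ∃ r : R, z = b * r} := hbu ▸ ⟨1, by simp⟩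
  obtain ⟨t, ht⟩ : c ∈ {z : R | ∃ r : R, z = r * v} := hcv ▸ ⟨1, by simp⟩
  obtain ⟨w, hw⟩ : v ∈ {z : R | ∃ r : R, z = r * c} := hcv ▸ ⟨1, by simp⟩
  refine ⟨⟨p * r, ?_⟩, ⟨s * t, ?_⟩, ?_, ?_⟩
  · calc y = b * r * y := hr
    _ = u * (p * r) * y := by rw [hp]; noncomm_ring
  · calc y = y * s * c := hs
    _ = y * (s * t) * v := by rw [ht]; noncomm_ring
  · calc y * a * u = y * a * b * q := by rw [hq]; noncomm_ring
    _ = u := by rw [hb, ← hq]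
  · calc v * a * y = w * (c * a * y) := by rw [hw]; noncomm_ring
    _ = v := by rw [hc, ← hw]

theorem bc_inverse_transfer {R : Type*} [Ring R] (a b c u v : R)
    (hbu : {z : R | ∃ r : R, z = b * r} = {z : R | ∃ r : R, z = u * r})
    (hcv : {z : R | ∃ r : R, z = r * c} = {z : R | ∃ r : R, z = r * v}) :
    ((∃ y : R, IsBCInverse a b c y) ↔ (∃ y : R, IsBCInverse a u v y)) ∧
    (∀ y : R, IsBCInverse a b c y → IsBCInverse a u v y) := by
  exact ⟨⟨fun ⟨y, h⟩ => ⟨y, bc_transfer_aux a b c u v y hbu hcv h⟩,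
    fun ⟨y, h⟩ => ⟨y, bc_transfer_aux a u v b c y hbu.symm hcv.symm h⟩⟩,
    fun y h => bc_transfer_aux a b c u v y hbu hcv h⟩
end

section
/- Let R be a unital ring and a, b ∈ R. Then the following are equivalent: (1) there exists y ∈ R with aya = a, yay = y, and yR = bR; (2) a is regular, aR = abR, and (ab)° = b°; (3) a is regular and R = a° ⊕ bR. -/
theorem inner_outer_inverse_tfae_range {R : Type*} [Ring R] (a b : R) :
    List.TFAE
      [∃ y : R, a * y * a = a ∧ y * a * y = y ∧
         {z : R | ∃ r : R, z = y * r} = {z : R | ∃ r : R, z = b * r},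
       RingRegular a ∧ {z : R | ∃ r : R, z = a * r} = {z : R | ∃ r : R, z = a * b * r} ∧
         {r : R | a * b * r = 0} = {r : R | b * r = 0},
       RingRegular a ∧ (∀ x : R, ∃ w r : R, a * w = 0 ∧ x = w + b * r) ∧
         (∀ x : R, a * x = 0 → (∃ r : R, x = b * r) → x = 0)] := by
  tfae_have 1 → 2 := by
    rintro ⟨y, h1, h2, h3⟩
    have hyb : ∀ z : R, (∃ r, z = y * r) ↔ (∃ r, z = b * r) := fun z => Set.ext_iff.mp h3 z
    refine ⟨⟨y, h1⟩, ?_, ?_⟩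
    · ext x
      simp only [Set.mem_setOf_eq]
      constructor
      · rintro ⟨r, rfl⟩
        obtain ⟨s, hs⟩ := (hyb (y * (a * r))).mp ⟨a * r, rfl⟩
        refine ⟨s, ?_⟩
        calc a * r = a * y * a * r := by rw [h1]
          _ = a * (y * (a * r)) := by noncomm_ring
          _ = a * (b * s) := by rw [hs]
          _ = a * b * s := by noncomm_ring
      · rintro ⟨r, rfl⟩
        exact ⟨b * r, by noncomm_ring⟩
    · ext r
      simp only [Set.mem_setOf_eq]
      constructor
      · intro h
        obtain ⟨s, hs⟩ := (hyb (b * r)).mpr ⟨r, rfl⟩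
        calc b * r = y * s := hs
          _ = y * a * y * s := by rw [h2]
          _ = y * a * (y * s) := by noncomm_ring
          _ = y * a * (b * r) := by rw [hs]
          _ = y * (a * b * r) := by noncomm_ring
          _ = 0 := by rw [h, mul_zero]
      · intro h
        calc a * b * r = a * (b * r) := by noncomm_ring
          _ = 0 := by rw [h, mul_zero]
  tfae_have 2 → 3 := by
    rintro ⟨hreg, hR, hker⟩
    refine ⟨hreg, ?_, ?_⟩
    · intro x
      obtain ⟨r, hr⟩ := (Set.ext_iff.mp hR (a * x)).mp ⟨x, rfl⟩
      exact ⟨x - b * r, r, by rw [mul_sub, hr]; noncomm_ring, by noncomm_ring⟩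
    · rintro x hx ⟨r, rfl⟩
      have : a * b * r = 0 := by rw [mul_assoc]; exact hx
      have := (Set.ext_iff.mp hker r).mp this
      exact this
  tfae_have 3 → 1 := by
    rintro ⟨⟨z, hz⟩, hspan, hint⟩
    obtain ⟨w, r, hw, hzw⟩ := hspan z
    set y₀ := b * r with hy₀
    have hay0a : a * y₀ * a = a := by
      have : a * z = a * y₀ := by rw [hzw, mul_add, hw, zero_add]
      calc a * y₀ * a = a * z * a := by rw [this]
        _ = a := hz
    refine ⟨y₀ * a * y₀, ?_, ?_, ?_⟩
    · calc a * (y₀ * a * y₀) * a = (a * y₀ * a) * (y₀ * a) := by noncomm_ring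
        _ = a * (y₀ * a) := by rw [hay0a]
        _ = a * y₀ * a := by noncomm_ring
        _ = a := hay0a
    · calc (y₀ * a * y₀) * a * (y₀ * a * y₀)
          = y₀ * (a * y₀ * a) * (y₀ * a * y₀) := by noncomm_ring
        _ = y₀ * a * (y₀ * a * y₀) := by rw [hay0a]
        _ = (y₀ * a * y₀) * (a * y₀) := by noncomm_ring
        _ = y₀ * (a * y₀ * a) * y₀ := by noncomm_ring
        _ = y₀ * a * y₀ := by rw [hay0a]
    · ext x
      simp only [Set.mem_setOf_eq]
      constructor
      · rintro ⟨t, rfl⟩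
        exact ⟨r * (a * (b * r) * t), by rw [hy₀]; noncomm_ring⟩
      · rintro ⟨s, rfl⟩
        have hd0 : b * s - (y₀ * a * y₀) * (a * (b * s)) = 0 := by
          apply hint
          · rw [mul_sub]
            have : a * ((y₀ * a * y₀) * (a * (b * s))) = (a * y₀ * a) * (y₀ * (a * (b * s))) := by
              noncomm_ring
            rw [this, hay0a]
            have : a * (y₀ * (a * (b * s))) = (a * y₀ * a) * (b * s) := by noncomm_ring
            rw [this, hay0a, sub_self]
          · exact ⟨s - r * (a * (b * r) * (a * (b * s))), by rw [hy₀]; noncomm_ring⟩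
        exact ⟨a * (b * s), by rw [← sub_eq_zero]; exact hd0⟩
  tfae_finish
end

section
/- Let R be a unital ring and a, c ∈ R. Then the following are equivalent: (1) there exists y ∈ R with aya = a, yay = y, and Ry = Rc; (2) a is regular, Rca = Ra, and °(ca) = °c; (3) a is regular and R = °a ⊕ Rc. -/
theorem inner_outer_inverse_tfae_corange {R : Type*} [Ring R] (a c : R) :
    List.TFAE
      [∃ y : R, a * y * a = a ∧ y * a * y = y ∧
         {z : R | ∃ r : R, z = r * y} = {z : R | ∃ r : R, z = r * c},
       RingRegular a ∧ {z : R | ∃ r : R, z = r * a} = {z : R | ∃ r : R, z = r * (c * a)} ∧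
         {r : R | r * (c * a) = 0} = {r : R | r * c = 0},
       RingRegular a ∧ (∀ x : R, ∃ w r : R, w * a = 0 ∧ x = w + r * c) ∧
         (∀ x : R, x * a = 0 → (∃ r : R, x = r * c) → x = 0)] := by
  tfae_have 1 → 2 := by
    rintro ⟨y, h1, h2, hset⟩
    obtain ⟨t, hy⟩ : y ∈ {z : R | ∃ r : R, z = r * c} := by
      rw [← hset]; exact ⟨1, (one_mul y).symm⟩
    obtain ⟨s, hc⟩ : c ∈ {z : R | ∃ r : R, z = r * y} := by
      rw [hset]; exact ⟨1, (one_mul c).symm⟩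
    refine ⟨⟨y, h1⟩, ?_, ?_⟩
    · ext x
      simp only [Set.mem_setOf_eq]
      constructor
      · rintro ⟨r, rfl⟩
        refine ⟨r * (a * t), ?_⟩
        calc r * a = r * (a * y * a) := by rw [h1]
          _ = r * (a * (t * c) * a) := by rw [← hy]
          _ = r * (a * t) * (c * a) := by noncomm_ring
      · rintro ⟨r, rfl⟩
        exact ⟨r * c, by noncomm_ring⟩
    · ext r
      simp only [Set.mem_setOf_eq]
      constructor
      · intro h
        calc r * c = r * (s * (y * a * y)) := by rw [h2, ← hc]
          _ = r * (s * y) * a * y := by noncomm_ring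
          _ = r * (c * a) * y := by rw [← hc]; noncomm_ring
          _ = 0 := by rw [h, zero_mul]
      · intro h
        calc r * (c * a) = r * c * a := by rw [mul_assoc]
          _ = 0 := by rw [h, zero_mul]
  tfae_have 2 → 3 := by
    rintro ⟨hreg, hra, hann⟩
    obtain ⟨t, ht⟩ : a ∈ {z : R | ∃ r : R, z = r * (c * a)} := by
      rw [← hra]; exact ⟨1, (one_mul a).symm⟩
    refine ⟨hreg, ?_, ?_⟩
    · intro x
      refine ⟨x - x * t * c, x * t, ?_, by noncomm_ring⟩
      calc (x - x * t * c) * a = x * a - x * (t * (c * a)) := by noncomm_ring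
        _ = x * a - x * a := by rw [← ht]
        _ = 0 := sub_self _
    · rintro x hxa ⟨r, rfl⟩
      have hr : r ∈ {r : R | r * (c * a) = 0} := by
        show r * (c * a) = 0
        rw [← mul_assoc]; exact hxa
      rw [hann] at hr
      rw [hr]
  tfae_have 3 → 1 := by
    rintro ⟨⟨z, hz⟩, hdec, huniq⟩
    obtain ⟨w, t, hwa, hzd⟩ := hdec z
    have hza : t * c * a = z * a := by
      calc t * c * a = w * a + t * c * a := by rw [hwa, zero_add]
        _ = (w + t * c) * a := by noncomm_ring
        _ = z * a := by rw [← hzd]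
    have hu : t * c * a * (t * c * a) = t * c * a := by
      rw [hza]
      calc z * a * (z * a) = z * (a * z * a) := by noncomm_ring
        _ = z * a := by rw [hz]
    have hya : t * c * a * t * c * a = t * c * a := by
      calc t * c * a * t * c * a = t * c * a * (t * c * a) := by noncomm_ring
        _ = t * c * a := hu
    refine ⟨t * c * a * t * c, ?_, ?_, ?_⟩
    · rw [mul_assoc a, hya, hza, ← mul_assoc, hz]
    · rw [hya]
      calc t * c * a * (t * c * a * t * c) = t * c * a * (t * c * a) * t * c := by noncomm_ring
        _ = t * c * a * t * c := by rw [hu]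
    · ext x
      simp only [Set.mem_setOf_eq]
      constructor
      · rintro ⟨r, rfl⟩
        exact ⟨r * (t * c * a * t), by noncomm_ring⟩
      · rintro ⟨r, rfl⟩
        have h1 : (c - c * a * (t * c * a * t * c)) * a = 0 := by
          calc (c - c * a * (t * c * a * t * c)) * a
              = c * a - c * a * (t * c * a * t * c * a) := by noncomm_ring
            _ = c * a - c * a * (t * c * a) := by rw [hya]
            _ = c * a - c * a * (z * a) := by rw [hza]
            _ = c * a - c * (a * z * a) := by noncomm_ring
            _ = c * a - c * a := by rw [hz]
            _ = 0 := sub_self _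
        have h2 : ∃ s : R, c - c * a * (t * c * a * t * c) = s * c :=
          ⟨1 - c * a * (t * c * a * t), by noncomm_ring⟩
        have hc0 : c = c * a * (t * c * a * t * c) := by
          exact sub_eq_zero.mp (huniq _ h1 h2)
        refine ⟨r * (c * a), ?_⟩
        calc r * c = r * (c * a * (t * c * a * t * c)) := by rw [← hc0]
          _ = r * (c * a) * (t * c * a * t * c) := by noncomm_ring
  tfae_finish
end

section
/- Let R be a unital ring and a, b, c ∈ R. Then the following are equivalent: (1) there exists y ∈ R such that aya = a and y is the (b,c)-inverse of a; (2) a is regular, aR = abR, Rca = Ra, (ab)° = b°, and °(ca) = °c; (3) a is regular, R = a° ⊕ bR, and R = °a ⊕ Rc. -/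
theorem bc_inverse_inner_tfae {R : Type*} [Ring R] (a b c : R) :
    List.TFAE
      [∃ y : R, a * y * a = a ∧ IsBCInverse a b c y,
       RingRegular a ∧
         {z : R | ∃ r : R, z = a * r} = {z : R | ∃ r : R, z = a * b * r} ∧
         {z : R | ∃ r : R, z = r * a} = {z : R | ∃ r : R, z = r * (c * a)} ∧
         {r : R | a * b * r = 0} = {r : R | b * r = 0} ∧
         {r : R | r * (c * a) = 0} = {r : R | r * c = 0},
       RingRegular a ∧
         ((∀ x : R, ∃ w r : R, a * w = 0 ∧ x = w + b * r) ∧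
          (∀ x : R, a * x = 0 → (∃ r : R, x = b * r) → x = 0)) ∧
         ((∀ x : R, ∃ w r : R, w * a = 0 ∧ x = w + r * c) ∧
          (∀ x : R, x * a = 0 → (∃ r : R, x = r * c) → x = 0))] := by
  tfae_have 1 → 2 := by
    rintro ⟨y, hy, ⟨r, hr⟩, ⟨s, hs⟩, hyab, hcay⟩
    refine ⟨⟨y, hy⟩, ?_, ?_, ?_, ?_⟩
    · ext z
      simp only [Set.mem_setOf_eq]
      constructor
      · rintro ⟨t, rfl⟩
        refine ⟨r * (y * (a * t)), ?_⟩
        calc a * t = a * y * a * t := by rw [hy]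
          _ = a * (b * r * y) * a * t := by rw [← hr]
          _ = a * b * (r * (y * (a * t))) := by noncomm_ring
      · rintro ⟨t, rfl⟩
        exact ⟨b * t, by rw [mul_assoc]⟩
    · ext z
      simp only [Set.mem_setOf_eq]
      constructor
      · rintro ⟨t, rfl⟩
        refine ⟨t * a * y * s, ?_⟩
        calc t * a = t * (a * y * a) := by rw [hy]
          _ = t * (a * (y * s * c) * a) := by rw [← hs]
          _ = t * a * y * s * (c * a) := by noncomm_ring
      · rintro ⟨t, rfl⟩
        exact ⟨t * c, by noncomm_ring⟩
    · ext t
      simp only [Set.mem_setOf_eq]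
      constructor
      · intro h
        calc b * t = y * a * b * t := by rw [hyab]
          _ = y * (a * b * t) := by noncomm_ring
          _ = 0 := by rw [h, mul_zero]
      · intro h
        rw [mul_assoc, h, mul_zero]
    · ext t
      simp only [Set.mem_setOf_eq]
      constructor
      · intro h
        calc t * c = t * (c * a * y) := by rw [hcay]
          _ = t * (c * a) * y := by noncomm_ring
          _ = 0 := by rw [h, zero_mul]
      · intro h
        have : t * (c * a) = t * c * a := by noncomm_ring
        rw [this, h, zero_mul]
  tfae_have 2 → 3 := by
    rintro ⟨hreg, hS1, hS2, hK1, hK2⟩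
    have hab : ∃ t, a = a * b * t := by
      have h : a ∈ {z : R | ∃ r, z = a * r} := ⟨1, (mul_one a).symm⟩
      rw [hS1] at h; exact h
    have hca : ∃ t, a = t * (c * a) := by
      have h : a ∈ {z : R | ∃ r, z = r * a} := ⟨1, (one_mul a).symm⟩
      rw [hS2] at h; exact h
    obtain ⟨t, ht⟩ := hab
    obtain ⟨u, hu⟩ := hca
    refine ⟨hreg, ⟨?_, ?_⟩, ?_, ?_⟩
    · intro x
      refine ⟨x - b * (t * x), t * x, ?_, by noncomm_ring⟩
      have e : a * (b * (t * x)) = a * x := by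
        calc a * (b * (t * x)) = a * b * t * x := by noncomm_ring
          _ = a * x := by rw [← ht]
      rw [mul_sub, e, sub_self]
    · rintro x hax ⟨v, rfl⟩
      have hv : v ∈ {r : R | a * b * r = 0} := by
        simp only [Set.mem_setOf_eq, mul_assoc]
        exact hax
      rw [hK1] at hv
      exact hv
    · intro x
      refine ⟨x - x * u * c, x * u, ?_, by noncomm_ring⟩
      have e : x * u * c * a = x * a := by
        calc x * u * c * a = x * (u * (c * a)) := by noncomm_ring
          _ = x * a := by rw [← hu]
      rw [sub_mul, e, sub_self]
    · rintro x hax ⟨v, rfl⟩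
      have hv : v ∈ {r : R | r * (c * a) = 0} := by
        have : v * (c * a) = v * c * a := by noncomm_ring
        simp only [Set.mem_setOf_eq, this]
        exact hax
      rw [hK2] at hv
      exact hv
  tfae_have 3 → 1 := by
    rintro ⟨⟨z, hz⟩, ⟨hd1, hu1⟩, ⟨hd2, hu2⟩⟩
    obtain ⟨w, r, hw, h1⟩ := hd1 1
    obtain ⟨w', s, hw', h1'⟩ := hd2 1
    have habr : a * (b * r) = a := by
      have h : a * (w + b * r) = a := by rw [← h1, mul_one]
      rwa [mul_add, hw, zero_add] at h
    have hsca : s * c * a = a := by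
      have h : (w' + s * c) * a = a := by rw [← h1', one_mul]
      rwa [add_mul, hw', zero_add] at h
    refine ⟨b * (r * (z * (s * c))), ?_, ?_⟩
    · calc a * (b * (r * (z * (s * c)))) * a = a * (b * r) * z * (s * c * a) := by noncomm_ring
        _ = a * z * a := by rw [habr, hsca]
        _ = a := hz
    have hyab : b * (r * (z * (s * c))) * a * b = b := by
      have key : a * (b - b * (r * (z * (a * b)))) = 0 := by
        have e : a * (b * (r * (z * (a * b)))) = a * b := by
          calc a * (b * (r * (z * (a * b)))) = a * (b * r) * z * a * b := by noncomm_ring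
            _ = a * z * a * b := by rw [habr]
            _ = a * b := by rw [hz]
        rw [mul_sub, e, sub_self]
      have h0 : b - b * (r * (z * (a * b))) = 0 :=
        hu1 _ key ⟨1 - r * (z * (a * b)), by noncomm_ring⟩
      have hb : b * (r * (z * (a * b))) = b := (sub_eq_zero.mp h0).symm
      calc b * (r * (z * (s * c))) * a * b = b * (r * (z * (s * c * a * b))) := by noncomm_ring
        _ = b * (r * (z * (a * b))) := by rw [hsca]
        _ = b := hb
    have hcay : c * a * (b * (r * (z * (s * c)))) = c := by
      have key : (c - c * a * (z * (s * c))) * a = 0 := by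
        have e : c * a * (z * (s * c)) * a = c * a := by
          calc c * a * (z * (s * c)) * a = c * (a * z * (s * c * a)) := by noncomm_ring
            _ = c * (a * z * a) := by rw [hsca]
            _ = c * a := by rw [hz]
        rw [sub_mul, e, sub_self]
      have h0 : c - c * a * (z * (s * c)) = 0 :=
        hu2 _ key ⟨1 - c * a * (z * s), by noncomm_ring⟩
      have hc : c * a * (z * (s * c)) = c := (sub_eq_zero.mp h0).symm
      calc c * a * (b * (r * (z * (s * c)))) = c * (a * (b * r)) * (z * (s * c)) := by noncomm_ring
        _ = c * a * (z * (s * c)) := by rw [habr]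
        _ = c := hc
    refine ⟨⟨r * (z * (s * (c * a))), ?_⟩, ⟨a * (b * (r * (z * s))), ?_⟩, hyab, hcay⟩
    · calc b * (r * (z * (s * c))) = b * (r * (z * (s * (c * a * (b * (r * (z * (s * c)))))))) := by
            rw [hcay]
        _ = b * (r * (z * (s * (c * a)))) * (b * (r * (z * (s * c)))) := by noncomm_ring
    · calc b * (r * (z * (s * c))) = b * (r * (z * (s * c))) * a * b * (r * (z * (s * c))) := by
            rw [hyab]
        _ = b * (r * (z * (s * c))) * (a * (b * (r * (z * s)))) * c := by noncomm_ring
  tfae_finish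
end

section
/- Let R be a ring with involution * and a ∈ R. Then a is core invertible if and only if aR = a²R, Ra*a = Ra, and (a²)° = a°. -/
/-- `x` is a core inverse of `a`. -/
def IsCoreInverse {R : Type*} [Ring R] [StarRing R] (a x : R) : Prop :=
  a * x * a = a ∧
  {z : R | ∃ r : R, z = x * r} = {z : R | ∃ r : R, z = a * r} ∧
  {z : R | ∃ r : R, z = r * x} = {z : R | ∃ r : R, z = r * star a}

theorem core_invertible_iff {R : Type*} [Ring R] [StarRing R] (a : R) :
    (∃ x : R, IsCoreInverse a x) ↔
      ({z : R | ∃ r : R, z = a * r} = {z : R | ∃ r : R, z = a * a * r} ∧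
       {z : R | ∃ r : R, z = r * (star a * a)} = {z : R | ∃ r : R, z = r * a} ∧
       {r : R | a * a * r = 0} = {r : R | a * r = 0}) := by
  constructor
  · rintro ⟨x, hx1, hx2, hx3⟩
    obtain ⟨u, hu⟩ : ∃ u, a = x * u := by
      have h : a ∈ {z : R | ∃ r : R, z = a * r} := ⟨1, (mul_one a).symm⟩
      rw [← hx2] at h; exact h
    obtain ⟨n, hn⟩ : ∃ n, x = a * n := by
      have h : x ∈ {z : R | ∃ r : R, z = x * r} := ⟨1, (mul_one x).symm⟩
      rw [hx2] at h; exact h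
    obtain ⟨v, hv⟩ : ∃ v, x = v * star a := by
      have h : x ∈ {z : R | ∃ r : R, z = r * x} := ⟨1, (one_mul x).symm⟩
      rw [hx3] at h; exact h
    have id1 : ∀ c : R, a * (x * (a * c)) = a * c := by
      intro c
      rw [← mul_assoc, ← mul_assoc, hx1]
    have hstarP : star (a * x) = a * (star v * star a) := by
      rw [hv]
      simp only [star_mul, star_star, mul_assoc]
    have hPP : (a * x) * star (a * x) = star (a * x) := by
      rw [hstarP]
      calc (a * x) * (a * (star v * star a))
          = a * (x * (a * (star v * star a))) := by rw [mul_assoc]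
        _ = a * (star v * star a) := id1 _
    have hN : star ((a * x) * star (a * x)) = (a * x) * star (a * x) := by
      rw [star_mul, star_star]
    have hP : a * x = star (a * x) := by
      conv_lhs => rw [← star_star (a * x)]
      rw [← hPP]
      exact hN
    have id3 : star a * (a * x) = star a := by
      calc star a * (a * x) = star a * star (a * x) := by rw [← hP]
        _ = star ((a * x) * a) := (star_mul _ _).symm
        _ = star a := by rw [hx1]
    have id4 : x * (a * x) = x := by
      calc x * (a * x) = (v * star a) * (a * x) := by rw [← hv]
        _ = v * (star a * (a * x)) := mul_assoc _ _ _
        _ = v * star a := by rw [id3]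
        _ = x := hv.symm
    have id5 : x * (a * a) = a := by
      calc x * (a * a) = x * (a * (x * u)) := by rw [← hu]
        _ = x * ((a * x) * u) := by rw [← mul_assoc a x u]
        _ = (x * (a * x)) * u := (mul_assoc x (a * x) u).symm
        _ = x * u := by rw [id4]
        _ = a := hu.symm
    have id6 : a = a * a * (n * a) := by
      calc a = a * x * a := hx1.symm
        _ = a * (x * a) := by rw [mul_assoc]
        _ = a * ((a * n) * a) := by rw [← hn]
        _ = a * a * (n * a) := by simp only [mul_assoc]
    have id7 : a = (a * v) * (star a * a) := by
      calc a = a * x * a := hx1.symm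
        _ = a * ((v * star a) * a) := by rw [mul_assoc, ← hv]
        _ = (a * v) * (star a * a) := by simp only [mul_assoc]
    refine ⟨?_, ?_, ?_⟩
    · ext z
      simp only [Set.mem_setOf_eq]
      constructor
      · rintro ⟨r, rfl⟩
        refine ⟨n * (a * r), ?_⟩
        conv_lhs => rw [id6]
        simp only [mul_assoc]
      · rintro ⟨r, rfl⟩
        exact ⟨a * r, mul_assoc a a r⟩
    · ext z
      simp only [Set.mem_setOf_eq]
      constructor
      · rintro ⟨r, rfl⟩
        exact ⟨r * star a, (mul_assoc r (star a) a).symm⟩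
      · rintro ⟨r, rfl⟩
        refine ⟨r * (a * v), ?_⟩
        conv_lhs => rw [id7]
        simp only [mul_assoc]
    · ext r
      simp only [Set.mem_setOf_eq]
      constructor
      · intro h0
        have e : a * r = x * (a * a * r) := by
          conv_lhs => rw [← id5]
          simp only [mul_assoc]
        rw [e, h0, mul_zero]
      · intro h0
        rw [mul_assoc, h0, mul_zero]
  · rintro ⟨h1, h2, h3⟩
    obtain ⟨s, hs⟩ : ∃ s, a = a * a * s := by
      have h : a ∈ {z : R | ∃ r : R, z = a * r} := ⟨1, (mul_one a).symm⟩
      rw [h1] at h; exact h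
    obtain ⟨t, ht⟩ : ∃ t, a = t * (star a * a) := by
      have h : a ∈ {z : R | ∃ r : R, z = r * a} := ⟨1, (one_mul a).symm⟩
      rw [← h2] at h; exact h
    have hann : ∀ r : R, a * a * r = 0 → a * r = 0 := by
      intro r hr
      have h : r ∈ {r : R | a * a * r = 0} := hr
      rw [h3] at h; exact h
    have hta : t * (star a * a) = a := ht.symm
    have F2 : a * (s * a) = a := by
      have e : a * a * (s * a) = a * a := by
        calc a * a * (s * a) = (a * a * s) * a := (mul_assoc _ _ _).symm
          _ = a * a := by rw [← hs]
      have h0 : a * a * (s * a - 1) = 0 := by rw [mul_sub, mul_one, e, sub_self]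
      have h4 := hann _ h0
      rw [mul_sub, mul_one, sub_eq_zero] at h4
      exact h4
    have F7 : a * (s * (s * a)) = a * s := by
      have e : a * a * (s * (s * a)) = a * a * s := by
        calc a * a * (s * (s * a)) = (a * a * s) * (s * a) := by simp only [mul_assoc]
          _ = a * (s * a) := by rw [← hs]
          _ = a := F2
          _ = a * a * s := hs
      have h0 : a * a * (s * (s * a) - s) = 0 := by rw [mul_sub, e, sub_self]
      have h4 := hann _ h0
      rw [mul_sub, sub_eq_zero] at h4
      exact h4
    have h5 := congrArg star ht
    rw [star_mul, star_mul, star_star] at h5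
    rw [mul_assoc] at h5
    -- h5 : star a = star a * (a * star t)
    have E2 : t * star a = a * star t := by
      calc t * star a = t * (star a * (a * star t)) := by rw [← h5]
        _ = (t * (star a * a)) * star t := by simp only [mul_assoc]
        _ = a * star t := by rw [hta]
    have hax : a * (a * (s * (s * (t * star a)))) = t * star a := by
      calc a * (a * (s * (s * (t * star a))))
          = (a * a * s) * (s * (t * star a)) := by simp only [mul_assoc]
        _ = a * (s * (t * star a)) := by rw [← hs]
        _ = a * (s * (a * star t)) := by rw [E2]
        _ = (a * (s * a)) * star t := by simp only [mul_assoc]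
        _ = a * star t := by rw [F2]
        _ = t * star a := E2.symm
    have hxaa : (a * (s * (s * (t * star a)))) * (a * a) = a := by
      calc (a * (s * (s * (t * star a)))) * (a * a)
          = a * (s * (s * ((t * (star a * a)) * a))) := by simp only [mul_assoc]
        _ = a * (s * (s * (a * a))) := by rw [hta]
        _ = (a * (s * (s * a))) * a := by simp only [mul_assoc]
        _ = (a * s) * a := by rw [F7]
        _ = a := by rw [mul_assoc]; exact F2
    have hsax : (star a * a) * (a * (s * (s * (t * star a)))) = star a := by
      calc (star a * a) * (a * (s * (s * (t * star a))))
          = star a * (a * (a * (s * (s * (t * star a))))) := by simp only [mul_assoc]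
        _ = star a * (t * star a) := by rw [hax]
        _ = star a * (a * star t) := by rw [E2]
        _ = star a := h5.symm
    refine ⟨a * (s * (s * (t * star a))), ?_, ?_, ?_⟩
    · rw [hax, mul_assoc]
      exact hta
    · ext z
      simp only [Set.mem_setOf_eq]
      constructor
      · rintro ⟨r, rfl⟩
        refine ⟨s * (s * (t * star a)) * r, ?_⟩
        simp only [mul_assoc]
      · rintro ⟨r, rfl⟩
        refine ⟨a * a * r, ?_⟩
        conv_lhs => rw [← hxaa]
        simp only [mul_assoc]
    · ext z
      simp only [Set.mem_setOf_eq]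
      constructor
      · rintro ⟨r, rfl⟩
        refine ⟨r * (a * (s * (s * t))), ?_⟩
        simp only [mul_assoc]
      · rintro ⟨r, rfl⟩
        refine ⟨r * (star a * a), ?_⟩
        rw [mul_assoc, hsax]
end

section
/- Let R be a unital ring and a, b, c, d ∈ R with b and c regular, dR = bR, and d° = c°. Then a is (b,c)-invertible if and only if a is invertible along d, and in this case the (b,c)-inverse of a coincides with the inverse of a along d. -/
theorem bc_inverse_eq_inverse_along {R : Type*} [Ring R] (a b c d : R)
    (hb : RingRegular b) (hc : RingRegular c)
    (hdb : {z : R | ∃ r : R, z = d * r} = {z : R | ∃ r : R, z = b * r})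
    (hdc : {r : R | d * r = 0} = {r : R | c * r = 0}) :
    ((∃ y : R, IsBCInverse a b c y) ↔ (∃ y : R, IsInverseAlong a d y)) ∧
    (∀ y : R, IsBCInverse a b c y → IsInverseAlong a d y) := by
  obtain ⟨z, hz⟩ := hb
  obtain ⟨w, hw⟩ := hc
  have hdb' := Set.ext_iff.mp hdb
  have hann : ∀ x : R, d * x = 0 ↔ c * x = 0 := fun x => Set.ext_iff.mp hdc x
  obtain ⟨v, hv⟩ : ∃ v, d = b * v := (hdb' d).mp ⟨1, (mul_one d).symm⟩
  obtain ⟨u, hu⟩ : ∃ u, b = d * u := (hdb' b).mpr ⟨1, (mul_one b).symm⟩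
  -- d = b * z * d
  have hbzd : b * z * d = d := by
    calc b * z * d = b * z * (b * v) := by rw [← hv]
    _ = b * z * b * v := by simp only [mul_assoc]
    _ = d := by rw [hz, ← hv]
  -- d * (u * z) * d = d  (d is regular)
  have hdtd : d * (u * z) * d = d := by
    calc d * (u * z) * d = d * u * (z * d) := by simp only [mul_assoc]
    _ = b * (z * d) := by rw [← hu]
    _ = d := by rw [← mul_assoc, hbzd]
  -- d = d * w * c
  have hdwc : d * w * c = d := by
    have h0 : c * (w * c - 1) = 0 := by
      rw [mul_sub, mul_one, ← mul_assoc, hw, sub_self]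
    have h1 : d * (w * c - 1) = 0 := (hann _).mpr h0
    rw [mul_sub, mul_one, ← mul_assoc, sub_eq_zero] at h1
    exact h1
  -- c = c * (u * z) * d
  have hctd : c * (u * z) * d = c := by
    have hdtd' : d * (u * z * d) = d := by
      calc d * (u * z * d) = d * (u * z) * d := by simp only [mul_assoc]
      _ = d := hdtd
    have h0 : d * (u * z * d - 1) = 0 := by rw [mul_sub, mul_one, hdtd', sub_self]
    have h1 : c * (u * z * d - 1) = 0 := (hann _).mp h0
    rw [mul_sub, mul_one, sub_eq_zero] at h1
    calc c * (u * z) * d = c * (u * z * d) := by simp only [mul_assoc]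
    _ = c := h1
  -- Forward implication: (b,c)-inverse → inverse along d
  have fwd : ∀ y : R, IsBCInverse a b c y → IsInverseAlong a d y := by
    intro y ⟨⟨r, hr⟩, ⟨s, hs⟩, hyab, hcay⟩
    have hyad : y * a * d = d := by
      calc y * a * d = y * a * (b * v) := by rw [← hv]
      _ = y * a * b * v := by simp only [mul_assoc]
      _ = d := by rw [hyab, ← hv]
    have hday : d * a * y = d := by
      have h0 : c * (a * y - 1) = 0 := by
        rw [mul_sub, mul_one, ← mul_assoc, hcay, sub_self]
      have h1 : d * (a * y - 1) = 0 := (hann _).mpr h0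
      rw [mul_sub, mul_one, ← mul_assoc, sub_eq_zero] at h1
      exact h1
    refine ⟨hyad, hday, ?_, ?_⟩
    · rintro x ⟨r', hr'⟩
      refine ⟨u * r * y * r', ?_⟩
      rw [hr']
      calc y * r' = b * r * y * r' := by rw [← hr]
      _ = d * u * r * y * r' := by rw [← hu]
      _ = d * (u * r * y * r') := by simp only [mul_assoc]
    · rintro x ⟨r', hr'⟩
      refine ⟨r' * y * s * (c * (u * z)), ?_⟩
      rw [hr']
      calc r' * y = r' * (y * s * c) := by rw [← hs]
      _ = r' * (y * s * (c * (u * z) * d)) := by rw [hctd]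
      _ = r' * y * s * (c * (u * z)) * d := by simp only [mul_assoc]
  -- Backward implication: inverse along d → (b,c)-inverse
  have bwd : ∀ y : R, IsInverseAlong a d y → IsBCInverse a b c y := by
    intro y ⟨hyad, hday, hyr, hry⟩
    obtain ⟨p, hp⟩ : ∃ p, y = d * p := hyr ⟨1, (mul_one y).symm⟩
    obtain ⟨q, hq⟩ : ∃ q, y = q * d := hry ⟨1, (one_mul y).symm⟩
    refine ⟨⟨z, ?_⟩, ⟨a * q * (d * w), ?_⟩, ?_, ?_⟩
    · -- y = b * z * y
      calc y = d * p := hp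
      _ = b * z * d * p := by rw [hbzd]
      _ = b * z * (d * p) := by rw [mul_assoc]
      _ = b * z * y := by rw [← hp]
    · -- y = y * (a * q * (d * w)) * c
      have hyay : y * a * y = y := by
        calc y * a * y = y * a * (d * p) := by rw [← hp]
        _ = y * a * d * p := by simp only [mul_assoc]
        _ = d * p := by rw [hyad]
        _ = y := hp.symm
      calc y = y * a * y := hyay.symm
      _ = y * a * (q * d) := by rw [← hq]
      _ = y * a * (q * (d * w * c)) := by rw [hdwc]
      _ = y * (a * q * (d * w)) * c := by simp only [mul_assoc]
    · -- y * a * b = b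
      calc y * a * b = y * a * (d * u) := by rw [← hu]
      _ = y * a * d * u := by simp only [mul_assoc]
      _ = d * u := by rw [hyad]
      _ = b := hu.symm
    · -- c * a * y = c
      calc c * a * y = c * (u * z) * d * a * y := by rw [hctd]
      _ = c * (u * z) * (d * a * y) := by simp only [mul_assoc]
      _ = c * (u * z) * d := by rw [hday]
      _ = c := hctd
  exact ⟨⟨fun ⟨y, hy⟩ => ⟨y, fwd y hy⟩, fun ⟨y, hy⟩ => ⟨y, bwd y hy⟩⟩, fwd⟩
end
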